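/- Let E be a real Hilbert space and let f : E → ℝ be differentiable at every point, with gradient ∇f satisfying ‖∇f x − ∇f y‖ ≤ L ‖x − y‖ for all x, y ∈ E, where L > 0. Let ε > 0 and n₀ ≥ 1, let x ∈ E, and let v ∈ E with v ≠ 0 and ‖v − ∇f(x)‖² ≤ ε²/8. Set η = min(ε / (2 L n₀), ‖v‖ / (4 L n₀)) and x' = x − (η/‖v‖) • v. Then f(x') − f(x) ≤ −(ε / (64 L n₀)) (12 ‖v‖ − 7 ε). (The sufficient-decrease inequality of Theorems 1 and 2 for one normalized R-SPIDER step, in Euclidean space, with the gradient-estimation error bound taken as a deterministic hypothesis.) -/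

import Mathlib

open InnerProductSpace in
-- descent lemma (with constant L instead of L/2, which suffices)
lemma descent {E : Type*} [NormedAddCommGroup E] [InnerProductSpace ℝ E] [CompleteSpace E]
    (f : E → ℝ) (hf : ∀ x : E, DifferentiableAt ℝ f x)
    (L : ℝ) (hL : 0 ≤ L)
    (hlip : ∀ x y : E, ‖gradient f x - gradient f y‖ ≤ L * ‖x - y‖)
    (x y : E) :
    f y - f x ≤ inner ℝ (gradient f x) (y - x) + L * ‖y - x‖ ^ 2 := by
  have key : ‖f y - f x - (fderiv ℝ f x) (y - x)‖ ≤ (L * ‖y - x‖) * ‖y - x‖ := by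
    apply (convex_segment x y).norm_image_sub_le_of_norm_hasFDerivWithin_le'
      (f' := fun z => fderiv ℝ f z)
      (fun z _ => ((hf z).hasFDerivAt).hasFDerivWithinAt) ?_
      (left_mem_segment ℝ x y) (right_mem_segment ℝ x y)
    intro z hz
    rw [segment_eq_image] at hz
    obtain ⟨t, ht, rfl⟩ := hz
    show ‖fderiv ℝ f ((1 - t) • x + t • y) - fderiv ℝ f x‖ ≤ L * ‖y - x‖
    rw [show (1 - t) • x + t • y = x + t • (y - x) by module]
    have h1 : ‖fderiv ℝ f (x + t • (y - x)) - fderiv ℝ f x‖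
        = ‖gradient f (x + t • (y - x)) - gradient f x‖ := by
      have : fderiv ℝ f (x + t • (y - x)) - fderiv ℝ f x
          = (toDual ℝ E) (gradient f (x + t • (y - x)) - gradient f x) := by
        simp [gradient, map_sub]
      rw [this, (toDual ℝ E).norm_map]
    rw [h1]
    calc ‖gradient f (x + t • (y - x)) - gradient f x‖
        ≤ L * ‖x + t • (y - x) - x‖ := hlip _ _
      _ ≤ L * ‖y - x‖ := by
          apply mul_le_mul_of_nonneg_left _ hL
          simp only [add_sub_cancel_left, norm_smul, Real.norm_eq_abs,
            abs_of_nonneg ht.1]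
          nlinarith [norm_nonneg (y - x), ht.1, ht.2]
  have h2 : (fderiv ℝ f x) (y - x) = inner ℝ (gradient f x) (y - x) := by
    simp [gradient]
  have := (abs_le.mp (by rwa [Real.norm_eq_abs] at key)).2
  rw [h2] at this
  nlinarith [this]

set_option maxHeartbeats 1000000 in
/-- Sufficient-decrease inequality of Theorems 1 and 2 for one normalized
R-SPIDER step, in Euclidean space, with the gradient-estimation error bound as
a deterministic hypothesis: with `η = min (ε/(2Ln₀)) (‖v‖/(4Ln₀))` and
`x' = x − (η/‖v‖) • v`, one has
`f x' − f x ≤ −(ε/(64Ln₀)) (12‖v‖ − 7ε)`. -/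
theorem stmt_8 {E : Type*} [NormedAddCommGroup E] [InnerProductSpace ℝ E]
    [CompleteSpace E]
    (f : E → ℝ) (hf : ∀ x : E, DifferentiableAt ℝ f x)
    (L : ℝ) (hL : 0 < L)
    (hlip : ∀ x y : E, ‖gradient f x - gradient f y‖ ≤ L * ‖x - y‖)
    (ε n₀ : ℝ) (hε : 0 < ε) (hn₀ : 1 ≤ n₀)
    (x : E) (v : E) (hv : v ≠ 0)
    (herr : ‖v - gradient f x‖ ^ 2 ≤ ε ^ 2 / 8)
    (η : ℝ) (hη : η = min (ε / (2 * L * n₀)) (‖v‖ / (4 * L * n₀)))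
    (x' : E) (hx' : x' = x - (η / ‖v‖) • v) :
    f x' - f x ≤ -(ε / (64 * L * n₀)) * (12 * ‖v‖ - 7 * ε) := by
  set a : ℝ := ‖v‖ with ha_def
  set e : ℝ := ‖v - gradient f x‖ with he_def
  have ha : 0 < a := norm_pos_iff.mpr hv
  have he : 0 ≤ e := norm_nonneg _
  have hc : 0 < L * n₀ := by positivity
  set c : ℝ := L * n₀ with hc_def
  set u : ℝ := c⁻¹ with hu_def
  have hu : 0 < u := by positivity
  have hcu : c * u = 1 := mul_inv_cancel₀ hc.ne'
  -- η positivity and value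
  have hη1 : ε / (2 * L * n₀) = ε * u / 2 := by
    rw [hu_def, hc_def]; field_simp
  have hη2 : a / (4 * L * n₀) = a * u / 4 := by
    rw [hu_def, hc_def]; field_simp
  have hηpos : 0 < η := by
    rw [hη]; apply lt_min <;> positivity
  -- the step vector
  have hd : x' - x = -((η / a) • v) := by rw [hx']; abel
  have hnd : ‖x' - x‖ = η := by
    rw [hd, norm_neg, norm_smul, Real.norm_eq_abs, abs_of_pos (by positivity), ← ha_def]
    field_simp
  -- inner product bound
  have hinner : inner ℝ (gradient f x) (x' - x) ≤ -(η / a) * (a ^ 2 - e * a) := by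
    rw [hd, inner_neg_right, real_inner_smul_right]
    have h1 : (a : ℝ) ^ 2 - e * a ≤ inner ℝ (gradient f x) v := by
      have h2 : (inner ℝ v v : ℝ) = a ^ 2 := real_inner_self_eq_norm_sq v
      have h3 : (inner ℝ (v - gradient f x) v : ℝ) ≤ e * a := by
        calc (inner ℝ (v - gradient f x) v : ℝ) ≤ ‖v - gradient f x‖ * ‖v‖ :=
              real_inner_le_norm _ _
          _ = e * a := rfl
      have h4 : (inner ℝ (gradient f x) v : ℝ) = inner ℝ v v - inner ℝ (v - gradient f x) v := by
        rw [← inner_sub_left]; congr 1; abel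
      rw [h4, h2]; linarith
    have : 0 < η / a := by positivity
    nlinarith
  have step : f x' - f x ≤ -η * a + η * e + c * η ^ 2 := by
    have hdes := descent f hf L hL.le hlip x x'
    have hL' : L * ‖x' - x‖ ^ 2 ≤ c * η ^ 2 := by
      rw [hnd, hc_def]
      nlinarith [mul_le_mul_of_nonneg_right
        (by nlinarith : L ≤ L * n₀) (sq_nonneg η)]
    have : -(η / a) * (a ^ 2 - e * a) = -η * a + η * e := by field_simp; ring
    nlinarith [hinner, hdes]
  -- rewrite goal RHS
  have hgoal : -(ε / (64 * L * n₀)) * (12 * a - 7 * ε)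
      = -(ε * u / 64) * (12 * a - 7 * ε) := by
    rw [hu_def, hc_def]; field_simp
  rw [hgoal]
  have herr' : 8 * e ^ 2 ≤ ε ^ 2 := by rw [he_def]; linarith
  rcases min_cases (ε / (2 * L * n₀)) (a / (4 * L * n₀)) with ⟨hmin, hle⟩ | ⟨hmin, hlt⟩
  · -- η = ε u / 2, and 2ε ≤ a
    have hηval : η = ε * u / 2 := by rw [hη, hmin, hη1]
    have haε : 2 * ε ≤ a := by
      rw [hη1, hη2] at hle
      have h := mul_le_mul_of_nonneg_left hle hc.le
      have h1 : c * (ε * u / 2) = ε / 2 := by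
        rw [show c * (ε * u / 2) = c * u * ε / 2 by ring, hcu]; ring
      have h2 : c * (a * u / 4) = a / 4 := by
        rw [show c * (a * u / 4) = c * u * a / 4 by ring, hcu]; ring
      rw [h1, h2] at h
      linarith
    rw [hηval] at step
    have key : c * (ε * u / 2) ^ 2 = ε ^ 2 * u / 4 := by
      have h : c * (ε * u / 2) ^ 2 = (c * u) * (ε ^ 2 * u) / 4 := by ring
      rw [h, hcu]; ring
    rw [key] at step
    nlinarith [mul_pos hε hu, mul_pos (mul_pos hε hε) hu, sq_nonneg (4 * e - ε),
      mul_le_mul_of_nonneg_left herr' (mul_pos hε hu).le,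
      mul_le_mul_of_nonneg_left haε (mul_pos (mul_pos hε hε) hu).le]
  · -- η = a u / 4, and a ≤ 2ε
    have hηval : η = a * u / 4 := by rw [hη, hmin, hη2]
    rw [hηval] at step
    have key : c * (a * u / 4) ^ 2 = a ^ 2 * u / 16 := by
      have h : c * (a * u / 4) ^ 2 = (c * u) * (a ^ 2 * u) / 16 := by ring
      rw [h, hcu]; ring
    rw [key] at step
    nlinarith [mul_pos ha hu, sq_nonneg (4 * e - ε), sq_nonneg (2 * a - ε),
      sq_nonneg (6 * a - 4 * e - 3 * ε),
      mul_le_mul_of_nonneg_left herr' (mul_pos ha hu).le,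
      mul_nonneg (mul_nonneg he ha.le) hu.le,
      mul_le_mul_of_nonneg_right (sq_nonneg (12 * a - 16 * e - 12 * ε)) hu.le]
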